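/- Solvability of the retrieval linear system: let q be a prime power and consider over F_q the linear system in NM unknowns consisting of M² unknowns X_{i,j} (i,j ∈ Fin M) and (N−M)M unknowns w (the file symbols), where the NM equations are: for each systematic node i and query index j, an equation of the form X_{i,j} + (0 or one file symbol w) = known value, and for each parity node and query index j, a fixed invertible linear combination of (X_{1,j},...,X_{M,j}) = known value. If the parity linear combinations LC^{M+1},...,LC^N together with the identity combinations form a matrix any M rows of which are invertible (MDS), and each file symbol appears in exactly one systematic equation, then the system has a unique solution. -/

import Mathlib

open BigOperators

/-- Solvability of the retrieval linear system: over a finite field `Fq`, the `N·M`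
equations in the `M²` masked unknowns `X i j` and the `(N−M)·M` file symbols `w r j` —
where for each query index `j` each systematic equation reads
`X i j + (0 or one file symbol) = known`, each file symbol appears in exactly one
systematic equation (the assignment `ψ j` of file symbols to systematic nodes being
injective), and each parity equation is a linear combination `∑ i, L r i * X i j = known`
such that any `M` rows of the matrix formed by the identity rows and the parity rows
`L` are invertible (MDS) — has a unique solution. -/
theorem retrieval_system_unique_solution {Fq : Type*} [Field Fq] [Fintype Fq]
    [DecidableEq Fq] (N M : ℕ) (hM : 1 ≤ M) (hMN : M < N)
    (L : Fin (N - M) → Fin M → Fq)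
    (hMDS : ∀ s : Fin M → (Fin M ⊕ Fin (N - M)), Function.Injective s →
      IsUnit (Matrix.of fun a b : Fin M =>
        Sum.elim (fun i : Fin M => fun b' : Fin M => if b' = i then (1 : Fq) else 0)
          L (s a) b).det)
    (ψ : Fin M → Fin (N - M) → Fin M) (hψ : ∀ j, Function.Injective (ψ j))
    (b1 : Fin M → Fin M → Fq) (b2 : Fin (N - M) → Fin M → Fq) :
    ∃! Xw : (Fin M → Fin M → Fq) × (Fin (N - M) → Fin M → Fq),
      (∀ i j : Fin M,
          Xw.1 i j + (∑ r : Fin (N - M), if ψ j r = i then Xw.2 r j else 0) = b1 i j) ∧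
        (∀ (r : Fin (N - M)) (j : Fin M), ∑ i, L r i * Xw.1 i j = b2 r j) := by
  classical
  have hkM : N - M ≤ M := by
    have := Fintype.card_le_of_injective _ (hψ ⟨0, hM⟩)
    simpa using this
  have sum_split : ∀ (j : Fin M) (f g : Fin (N - M) → Fq) (i : Fin M),
      (∑ r, if ψ j r = i then f r + g r else 0) =
        (∑ r, if ψ j r = i then f r else 0) + (∑ r, if ψ j r = i then g r else 0) := by
    intro j f g i
    rw [← Finset.sum_add_distrib]
    exact Finset.sum_congr rfl fun r _ => by split <;> simp
  let T : ((Fin M → Fin M → Fq) × (Fin (N - M) → Fin M → Fq)) →ₗ[Fq]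
      ((Fin M → Fin M → Fq) × (Fin (N - M) → Fin M → Fq)) :=
    { toFun := fun Xw =>
        (fun i j => Xw.1 i j + ∑ r, if ψ j r = i then Xw.2 r j else 0,
         fun r j => ∑ i, L r i * Xw.1 i j)
      map_add' := by
        intro x y
        refine Prod.ext (funext fun i => funext fun j => ?_)
          (funext fun r => funext fun j => ?_)
        · show (x.1 i j + y.1 i j) + (∑ r, if ψ j r = i then x.2 r j + y.2 r j else 0)
            = (x.1 i j + ∑ r, if ψ j r = i then x.2 r j else 0)
              + (y.1 i j + ∑ r, if ψ j r = i then y.2 r j else 0)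
          rw [sum_split j (fun r => x.2 r j) (fun r => y.2 r j) i]
          ring
        · show (∑ i, L r i * (x.1 i j + y.1 i j))
            = (∑ i, L r i * x.1 i j) + ∑ i, L r i * y.1 i j
          simp [mul_add, Finset.sum_add_distrib]
      map_smul' := by
        intro c x
        refine Prod.ext (funext fun i => funext fun j => ?_)
          (funext fun r => funext fun j => ?_)
        · show (c * x.1 i j + ∑ r, if ψ j r = i then c * x.2 r j else 0)
            = c * (x.1 i j + ∑ r, if ψ j r = i then x.2 r j else 0)
          simp [mul_add, Finset.mul_sum, mul_ite]
        · show (∑ i, L r i * (c * x.1 i j)) = c * ∑ i, L r i * x.1 i j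
          rw [Finset.mul_sum]
          exact Finset.sum_congr rfl fun i _ => by ring }
  have hinj : Function.Injective T := by
    refine (injective_iff_map_eq_zero T).mpr ?_
    rintro ⟨X, w⟩ h0
    have h1 : ∀ i j, X i j + ∑ r, (if ψ j r = i then w r j else 0) = 0 := fun i j =>
      congrFun (congrFun (congrArg Prod.fst h0) i) j
    have h2 : ∀ r j, ∑ i, L r i * X i j = 0 := fun r j =>
      congrFun (congrFun (congrArg Prod.snd h0) r) j
    have hX : ∀ i j, X i j = 0 := by
      intro i₀ j
      have hcard : Fintype.card ({i : Fin M // i ∈ (Finset.univ.image (ψ j))ᶜ} ⊕ Fin (N - M))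
          = Fintype.card (Fin M) := by
        rw [Fintype.card_sum, Fintype.card_coe, Finset.card_compl,
          Finset.card_image_of_injective _ (hψ j)]
        simp [Finset.card_univ, Nat.sub_add_cancel hkM]
      let σ := (Fintype.equivOfCardEq hcard).symm
      let s : Fin M → Fin M ⊕ Fin (N - M) := fun a => Sum.map Subtype.val id (σ a)
      have hs : Function.Injective s :=
        (Subtype.val_injective.sumMap (fun _ _ h => h)).comp σ.injective
      have hdet := hMDS s hs
      let A : Matrix (Fin M) (Fin M) Fq := Matrix.of fun a b =>
        Sum.elim (fun i : Fin M => fun b' : Fin M => if b' = i then (1 : Fq) else 0)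
          L (s a) b
      have hAinj : Function.Injective A.mulVec := by
        haveI := A.invertibleOfIsUnitDet hdet
        exact A.mulVec_injective_of_invertible
      have hzero : A.mulVec (fun i => X i j) = 0 := by
        funext a
        simp only [Matrix.mulVec, dotProduct, A, Matrix.of_apply, s, Pi.zero_apply]
        rcases hσ : σ a with ⟨i, hi⟩ | r
        · have hnot : ∀ r, ψ j r ≠ i := by
            intro r hr
            exact (Finset.mem_compl.mp hi) (Finset.mem_image.mpr ⟨r, Finset.mem_univ r, hr⟩)
          have hXij : X i j = 0 := by
            have h := h1 i j
            rwa [Finset.sum_eq_zero (fun r _ => if_neg (hnot r)), add_zero] at h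
          simp [hσ, ite_mul, Finset.sum_ite_eq', hXij]
        · simpa [hσ] using h2 r j
      have := hAinj (hzero.trans (Matrix.mulVec_zero A).symm)
      exact congrFun this i₀
    have hw : ∀ r j, w r j = 0 := by
      intro r j
      have h := h1 (ψ j r) j
      rwa [hX, Finset.sum_congr rfl (fun r' _ => if_congr (hψ j).eq_iff rfl rfl),
        Finset.sum_ite_eq' Finset.univ r (fun r' => w r' j),
        if_pos (Finset.mem_univ r), zero_add] at h
    exact Prod.ext (funext fun i => funext fun j => hX i j)
      (funext fun r => funext fun j => hw r j)
  have hsurj : Function.Surjective T := (LinearMap.injective_iff_surjective).mp hinj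
  obtain ⟨z, hz⟩ := hsurj (b1, b2)
  refine ⟨z, ⟨fun i j => congrFun (congrFun (congrArg Prod.fst hz) i) j,
    fun r j => congrFun (congrFun (congrArg Prod.snd hz) r) j⟩, ?_⟩
  rintro y ⟨hy1, hy2⟩
  apply hinj
  rw [hz]
  exact Prod.ext (funext fun i => funext fun j => hy1 i j)
    (funext fun r => funext fun j => hy2 r j)
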